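/- arXiv:2304.07284 — 7 statements merged into one kernel-verified Lean document; each statement's English description precedes it below -/
import Mathlib

section
/- Let n > ℓ ≥ 1 be integers and α ∈ (0,1) with αℓ ∈ ℕ. For the Cayley graph C_{n,ℓ,α} on the group (ℤ/nℤ)^ℓ whose random-walk step adds a uniformly random y ∈ [n]^ℓ masked by a uniformly random 0/1 vector b of Hamming weight αℓ, the eigenvalue corresponding to the character χ_T (T ∈ [n]^ℓ) equals C(ℓ−|T|, (1−α)ℓ−|T|)/C(ℓ, (1−α)ℓ) if |T| ≤ (1−α)ℓ, and 0 otherwise, where |T| = #{i : Tᵢ ≠ 0}. -/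
set_option maxHeartbeats 1000000
open Finset

lemma cayley_aux_exp (n : ℕ) [NeZero n] (a b : ZMod n) :
    Complex.exp (2 * Real.pi * Complex.I * ((a.val : ℕ) : ℂ) * ((b.val : ℕ) : ℂ) / (n : ℂ)) =
    ZMod.stdAddChar (a * b) := by
  have h : (((a.val * b.val : ℕ) : ℤ) : ZMod n) = a * b := by
    push_cast
    rw [ZMod.natCast_val, ZMod.natCast_val, ZMod.cast_id, ZMod.cast_id]
  rw [← h, ZMod.stdAddChar_coe]
  congr 1
  push_cast
  ring

lemma cayley_aux_sumchar (n : ℕ) [NeZero n] (c : ZMod n) :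
    ∑ a : ZMod n, ZMod.stdAddChar (c * a) = if c = 0 then (n : ℂ) else 0 := by
  split_ifs with h
  · simp [h, ZMod.card]
  · have := AddChar.sum_eq_zero_of_ne_one (ZMod.isPrimitive_stdAddChar n h)
    simpa [AddChar.mulShift_apply] using this

/-- Eigenvalues of the Johnson-approximating Cayley graph `C_{n,ℓ,α}` on `(ℤ/nℤ)^ℓ`:
the character `χ_T` is an eigenvector of the (unnormalized) walk sum with eigenvalue
`C(ℓ−|T|, (1−α)ℓ−|T|)/C(ℓ, (1−α)ℓ)` if `|T| ≤ (1−α)ℓ`, and `0` otherwise. -/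
theorem cayley_johnson_eigenvalues (n ℓ t : ℕ) [NeZero n] (α : ℝ)
    (hα : 0 < α ∧ α < 1) (hℓ : 1 ≤ ℓ) (hn : ℓ < n)
    (ht : (t : ℝ) = α * ℓ)
    (T : Fin ℓ → ZMod n) (x : Fin ℓ → ZMod n) :
    let χ : (Fin ℓ → ZMod n) → ℂ := fun z =>
      ∏ i, Complex.exp (2 * Real.pi * Complex.I * ((T i).val : ℂ) * ((z i).val : ℂ) / (n : ℂ))
    let degT : ℕ := (Finset.univ.filter fun i => T i ≠ 0).card
    let lam : ℝ :=
      if degT ≤ ℓ - t then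
        ((ℓ - degT).choose (ℓ - t - degT) : ℝ) / ((ℓ.choose (ℓ - t)) : ℝ)
      else 0
    (∑ S ∈ Finset.powersetCard t (Finset.univ : Finset (Fin ℓ)),
        ∑ y : Fin ℓ → ZMod n, χ (fun i => x i + if i ∈ S then y i else 0))
      = ((ℓ.choose t : ℂ) * (n : ℂ) ^ ℓ) * (lam : ℂ) * χ x := by
  intro χ degT lam
  have htl : t < ℓ := by
    have h1 : (t : ℝ) < (ℓ : ℝ) := by
      rw [ht]
      nlinarith [hα.1, hα.2, (by exact_mod_cast hℓ : (1:ℝ) ≤ (ℓ:ℝ))]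
    exact_mod_cast h1
  have hd : degT ≤ ℓ := by
    simpa using (Finset.card_filter_le Finset.univ fun i => T i ≠ 0)
  -- rewrite χ in terms of stdAddChar
  have hχ : ∀ z : Fin ℓ → ZMod n, χ z = ∏ i, ZMod.stdAddChar (T i * z i) := by
    intro z
    exact Finset.prod_congr rfl fun i _ => cayley_aux_exp n (T i) (z i)
  -- inner sum
  have hinner : ∀ S : Finset (Fin ℓ),
      (∑ y : Fin ℓ → ZMod n, χ (fun i => x i + if i ∈ S then y i else 0))
      = (if ∀ i ∈ S, T i = 0 then (n : ℂ) ^ ℓ else 0) * χ x := by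
    intro S
    have key : (∑ y : Fin ℓ → ZMod n, ∏ i, ZMod.stdAddChar (T i * (x i + if i ∈ S then y i else 0)))
        = ∏ i, ∑ a : ZMod n, ZMod.stdAddChar (T i * (x i + if i ∈ S then a else 0)) :=
      (Fintype.prod_sum (fun i a => ZMod.stdAddChar (T i * (x i + if i ∈ S then a else 0)))).symm
    calc (∑ y : Fin ℓ → ZMod n, χ (fun i => x i + if i ∈ S then y i else 0))
        = ∑ y : Fin ℓ → ZMod n, ∏ i, ZMod.stdAddChar (T i * (x i + if i ∈ S then y i else 0)) := by
          refine Finset.sum_congr rfl fun y _ => ?_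
          exact hχ _
      _ = ∏ i, ∑ a : ZMod n, ZMod.stdAddChar (T i * (x i + if i ∈ S then a else 0)) := key
      _ = ∏ i, (ZMod.stdAddChar (T i * x i) *
            (if i ∈ S then (if T i = 0 then (n : ℂ) else 0) else (n : ℂ))) := by
          refine Finset.prod_congr rfl fun i _ => ?_
          by_cases hi : i ∈ S
          · simp only [hi, if_true]
            have : ∀ a : ZMod n, ZMod.stdAddChar (T i * (x i + a))
                = ZMod.stdAddChar (T i * x i) * ZMod.stdAddChar (T i * a) := by
              intro a
              rw [mul_add, AddChar.map_add_eq_mul]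
            simp_rw [this, ← Finset.mul_sum, cayley_aux_sumchar]
          · simp only [hi, if_false, add_zero]
            rw [Finset.sum_const, Finset.card_univ, ZMod.card]
            simp [nsmul_eq_mul, mul_comm]
      _ = (∏ i, ZMod.stdAddChar (T i * x i)) *
            ∏ i, (if i ∈ S then (if T i = 0 then (n : ℂ) else 0) else (n : ℂ)) :=
          Finset.prod_mul_distrib
      _ = (if ∀ i ∈ S, T i = 0 then (n : ℂ) ^ ℓ else 0) * χ x := by
          rw [hχ x, mul_comm]
          congr 1
          split_ifs with h
          · have : ∀ i ∈ (Finset.univ : Finset (Fin ℓ)),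
                (if i ∈ S then (if T i = 0 then (n : ℂ) else 0) else (n : ℂ)) = (n : ℂ) := by
              intro i _
              by_cases hi : i ∈ S
              · simp [hi, h i hi]
              · simp [hi]
            rw [Finset.prod_congr rfl this, Finset.prod_const, Finset.card_univ, Fintype.card_fin]
          · push_neg at h
            obtain ⟨i, hiS, hT⟩ := h
            exact Finset.prod_eq_zero (Finset.mem_univ i) (by simp [hiS, hT])
  -- outer sum
  have hfilter : (Finset.powersetCard t (Finset.univ : Finset (Fin ℓ))).filter
      (fun S => ∀ i ∈ S, T i = 0)
      = Finset.powersetCard t ((Finset.univ.filter fun i => T i ≠ 0)ᶜ) := by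
    ext S
    simp only [Finset.mem_filter, Finset.mem_powersetCard, Finset.subset_iff,
      Finset.mem_compl, Finset.mem_univ, true_and, not_not, ne_eq]
    tauto
  have hcard : ((Finset.univ.filter fun i => T i ≠ 0)ᶜ).card = ℓ - degT := by
    rw [Finset.card_compl, Fintype.card_fin]
  calc (∑ S ∈ Finset.powersetCard t (Finset.univ : Finset (Fin ℓ)),
        ∑ y : Fin ℓ → ZMod n, χ (fun i => x i + if i ∈ S then y i else 0))
      = ∑ S ∈ Finset.powersetCard t (Finset.univ : Finset (Fin ℓ)),
          (if ∀ i ∈ S, T i = 0 then (n : ℂ) ^ ℓ else 0) * χ x :=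
        Finset.sum_congr rfl fun S _ => hinner S
    _ = ∑ S ∈ (Finset.powersetCard t (Finset.univ : Finset (Fin ℓ))).filter
          (fun S => ∀ i ∈ S, T i = 0), (n : ℂ) ^ ℓ * χ x := by
        rw [Finset.sum_filter]
        refine Finset.sum_congr rfl fun S _ => ?_
        split_ifs <;> simp
    _ = (((ℓ - degT).choose t : ℂ)) * ((n : ℂ) ^ ℓ * χ x) := by
        rw [hfilter, Finset.sum_const, Finset.card_powersetCard, hcard, nsmul_eq_mul]
    _ = ((ℓ.choose t : ℂ) * (n : ℂ) ^ ℓ) * (lam : ℂ) * χ x := by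
        have hlam : ((ℓ - degT).choose t : ℝ) = (ℓ.choose t : ℝ) * lam := by
          show ((ℓ - degT).choose t : ℝ) = (ℓ.choose t : ℝ) *
            (if degT ≤ ℓ - t then
              ((ℓ - degT).choose (ℓ - t - degT) : ℝ) / ((ℓ.choose (ℓ - t)) : ℝ) else 0)
          split_ifs with h
          · have h1 : t ≤ ℓ - degT := by omega
            have h2 : ℓ - t - degT = (ℓ - degT) - t := by omega
            rw [h2, Nat.choose_symm h1, Nat.choose_symm (le_of_lt htl)]
            have hne : ((ℓ.choose t : ℝ)) ≠ 0 := by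
              exact Nat.cast_ne_zero.mpr (Nat.choose_pos (le_of_lt htl)).ne'
            field_simp
          · have h3 : ℓ - degT < t := by omega
            rw [Nat.choose_eq_zero_of_lt h3]
            simp
        have hc : ((ℓ - degT).choose t : ℂ) = (ℓ.choose t : ℂ) * (lam : ℂ) := by
          exact_mod_cast congrArg (Complex.ofReal) hlam
        rw [hc]
        ring
end

section
/- Let F : (ℤ/nℤ)^ℓ → ℝ be permutation-invariant, and for each i let F_i(X) = Σ_{|T|=i} F̂(T)χ_T(X) be its level-i part and η_i = E_X[F_i(X)²] the level-i Fourier weight. Then E_{X ∈ (ℤ/nℤ)^i}[f_{i,F}(X)²] = η_i / C(ℓ,i), where f_{i,F} is as defined from the Fourier coefficients of F and C(ℓ,i) is a binomial coefficient. -/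
open Finset

/-- The character `χ_T` on `(ℤ/nℤ)^k`. -/
noncomputable def cayleyChar {n k : ℕ} (T z : Fin k → ZMod n) : ℂ :=
  ∏ i, Complex.exp (2 * Real.pi * Complex.I * ((T i).val : ℂ) * ((z i).val : ℂ) / (n : ℂ))

/-- Fourier coefficient of `F : (ℤ/nℤ)^ℓ → ℝ` at `T`. -/
noncomputable def fCoeff (n ℓ : ℕ) [NeZero n] (F : (Fin ℓ → ZMod n) → ℝ)
    (T : Fin ℓ → ZMod n) : ℂ :=
  (1 / (n : ℂ) ^ ℓ) * ∑ x : Fin ℓ → ZMod n, (F x : ℂ) * (starRingEnd ℂ) (cayleyChar T x)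

/-- Pad a tuple in `(ℤ/nℤ)^i` with zeros to a tuple in `(ℤ/nℤ)^ℓ`. -/
def padTuple (n ℓ i : ℕ) (T : Fin i → ZMod n) : Fin ℓ → ZMod n :=
  fun j => if hj : (j : ℕ) < i then T ⟨j, hj⟩ else 0

/-- Glue a prefix `A ∈ (ℤ/nℤ)^a` with a suffix `Y ∈ (ℤ/nℤ)^{ℓ-a}`. -/
def glueTuple (n ℓ a : ℕ) (A : Fin a → ZMod n) (Y : Fin (ℓ - a) → ZMod n) :
    Fin ℓ → ZMod n :=
  fun j => if hj : (j : ℕ) < a then A ⟨j, hj⟩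
           else Y ⟨(j : ℕ) - a, by have := j.isLt; omega⟩

/-- The function `f_{i,F}` built from the level-`i` Fourier coefficients of `F`
supported on the first `i` coordinates. -/
noncomputable def juntaPart (n ℓ i : ℕ) [NeZero n] (F : (Fin ℓ → ZMod n) → ℝ)
    (x : Fin i → ZMod n) : ℂ :=
  ∑ T ∈ Finset.univ.filter (fun T : Fin i → ZMod n => ∀ j, T j ≠ 0),
    fCoeff n ℓ F (padTuple n ℓ i T) * cayleyChar T x

/-- The restriction density `δ_A(F)`: the average of `F` after fixing the first
`a` coordinates to `A`. -/
noncomputable def resDensity (n ℓ a : ℕ) [NeZero n] (F : (Fin ℓ → ZMod n) → ℝ)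
    (A : Fin a → ZMod n) : ℝ :=
  (1 / (n : ℝ) ^ (ℓ - a)) * ∑ Y : Fin (ℓ - a) → ZMod n, F (glueTuple n ℓ a A Y)

/-- The level-`i` part of `F`. -/
noncomputable def levelPart (n ℓ i : ℕ) [NeZero n] (F : (Fin ℓ → ZMod n) → ℝ)
    (X : Fin ℓ → ZMod n) : ℂ :=
  ∑ T ∈ Finset.univ.filter
      (fun T : Fin ℓ → ZMod n => (Finset.univ.filter fun j => T j ≠ 0).card = i),
    fCoeff n ℓ F T * cayleyChar T X

/-! ### Auxiliary lemmas -/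

/-- The one-dimensional character factor. -/
noncomputable def ec (n : ℕ) (t z : ZMod n) : ℂ :=
  Complex.exp (2 * Real.pi * Complex.I * (t.val : ℂ) * (z.val : ℂ) / (n : ℂ))

lemma sum_ec (n : ℕ) [NeZero n] (t s : ZMod n) :
    ∑ z : ZMod n, ec n t z * (starRingEnd ℂ) (ec n s z) = if t = s then (n : ℂ) else 0 := by
  have hn : (n : ℂ) ≠ 0 := Nat.cast_ne_zero.mpr (NeZero.ne n)
  set a : ℤ := (t.val : ℤ) - (s.val : ℤ) with ha
  set ω : ℂ := Complex.exp (2 * Real.pi * Complex.I * (a : ℂ) / n) with hω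
  have key : ∀ z : ZMod n, ec n t z * (starRingEnd ℂ) (ec n s z) = ω ^ z.val := by
    intro z
    rw [ec, ec, ← Complex.exp_conj, ← Complex.exp_add, ← Complex.exp_nat_mul]
    congr 1
    have : (starRingEnd ℂ) (2 * Real.pi * Complex.I * (s.val : ℂ) * (z.val : ℂ) / n)
        = -(2 * Real.pi * Complex.I * (s.val : ℂ) * (z.val : ℂ) / n) := by
      simp only [map_div₀, map_mul, map_ofNat, Complex.conj_I, Complex.conj_natCast,
        Complex.conj_ofReal]
      ring
    rw [this]
    push_cast [ha]
    field_simp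
    ring
  rw [Finset.sum_congr rfl (fun z _ => key z)]
  have hsum : ∑ z : ZMod n, ω ^ z.val = ∑ v ∈ Finset.range n, ω ^ v := by
    refine Finset.sum_nbij' (fun z : ZMod n => z.val) (fun v => (v : ZMod n)) ?_ ?_ ?_ ?_ ?_
    · intro z _; exact Finset.mem_range.mpr (ZMod.val_lt z)
    · intro v _; exact Finset.mem_univ _
    · intro z _; simp [ZMod.natCast_val, ZMod.cast_id]
    · intro v hv; exact ZMod.val_cast_of_lt (Finset.mem_range.mp hv)
    · intro z _; rfl
  rw [hsum]
  by_cases hts : t = s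
  · subst hts
    have hω1 : ω = 1 := by rw [hω]; simp [ha]
    simp [hω1]
  · have haz : a ≠ 0 := by
      simp only [ha, sub_ne_zero]
      exact_mod_cast fun h => hts (ZMod.val_injective n h)
    have h2 : (2 * Real.pi * Complex.I : ℂ) ≠ 0 := by
      simp [Real.pi_ne_zero, Complex.I_ne_zero, Complex.ofReal_ne_zero]
    have hω1 : ω ≠ 1 := by
      intro h
      rw [hω, Complex.exp_eq_one_iff] at h
      obtain ⟨k, hk⟩ := h
      rw [div_eq_iff hn] at hk
      have hk' : (a : ℂ) * (2 * Real.pi * Complex.I)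
          = ((k * n : ℤ) : ℂ) * (2 * Real.pi * Complex.I) := by
        push_cast
        linear_combination hk
      have hac : a = k * n := by exact_mod_cast mul_right_cancel₀ h2 hk'
      have hk0 : k ≠ 0 := by rintro rfl; simp at hac; exact haz hac
      have h1 : (n : ℤ) ≤ |a| := by
        rw [hac, abs_mul]
        calc (n : ℤ) = 1 * |(n : ℤ)| := by simp
        _ ≤ |k| * |(n : ℤ)| := by
            apply mul_le_mul_of_nonneg_right (Int.one_le_abs hk0) (abs_nonneg _)
      have h3 : |a| < n := by
        have := ZMod.val_lt t; have := ZMod.val_lt s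
        rw [abs_lt]; omega
      omega
    have hωn : ω ^ n = 1 := by
      rw [hω, ← Complex.exp_nat_mul]
      have : (n : ℂ) * (2 * Real.pi * Complex.I * (a : ℂ) / n)
          = a * (2 * Real.pi * Complex.I) := by
        field_simp
      rw [this, Complex.exp_int_mul_two_pi_mul_I]
    rw [geom_sum_eq hω1, hωn]
    simp [hts]

lemma cayleyChar_eq {n k : ℕ} (T z : Fin k → ZMod n) :
    cayleyChar T z = ∏ j, ec n (T j) (z j) := rfl

lemma sum_char (n k : ℕ) [NeZero n] (T S : Fin k → ZMod n) :
    ∑ z : Fin k → ZMod n, cayleyChar T z * (starRingEnd ℂ) (cayleyChar S z)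
      = if T = S then (n : ℂ) ^ k else 0 := by
  have h1 : ∀ z : Fin k → ZMod n, cayleyChar T z * (starRingEnd ℂ) (cayleyChar S z)
      = ∏ j, ec n (T j) (z j) * (starRingEnd ℂ) (ec n (S j) (z j)) := by
    intro z
    rw [cayleyChar_eq, cayleyChar_eq, map_prod, Finset.prod_mul_distrib]
  rw [Finset.sum_congr rfl (fun z _ => h1 z),
    ← Fintype.prod_sum fun j (x : ZMod n) => ec n (T j) x * (starRingEnd ℂ) (ec n (S j) x)]
  have h2 : ∀ j, (∑ x : ZMod n, ec n (T j) x * (starRingEnd ℂ) (ec n (S j) x))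
      = if T j = S j then (n : ℂ) else 0 := fun j => sum_ec n (T j) (S j)
  rw [Finset.prod_congr rfl (fun j _ => h2 j)]
  by_cases h : T = S
  · subst h; simp
  · rw [if_neg h]
    obtain ⟨j0, hj0⟩ : ∃ j, T j ≠ S j := by
      by_contra hc; push_neg at hc; exact h (funext hc)
    exact Finset.prod_eq_zero (Finset.mem_univ j0) (by rw [if_neg hj0])

lemma parsevalC (n k : ℕ) [NeZero n] (c : (Fin k → ZMod n) → ℂ) :
    ∑ x : Fin k → ZMod n, ((Complex.normSq (∑ T, c T * cayleyChar T x) : ℝ) : ℂ)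
      = (n : ℂ) ^ k * ∑ T, ((Complex.normSq (c T) : ℝ) : ℂ) := by
  have h1 : ∀ x : Fin k → ZMod n,
      ((Complex.normSq (∑ T, c T * cayleyChar T x) : ℝ) : ℂ)
      = ∑ T, ∑ S, (c T * (starRingEnd ℂ) (c S)) *
          (cayleyChar T x * (starRingEnd ℂ) (cayleyChar S x)) := by
    intro x
    rw [← Complex.mul_conj, map_sum, Finset.sum_mul_sum]
    refine Finset.sum_congr rfl fun T _ => Finset.sum_congr rfl fun S _ => ?_
    rw [map_mul]; ring
  rw [Finset.sum_congr rfl (fun x _ => h1 x), Finset.sum_comm]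
  rw [Finset.sum_congr rfl (fun T (_ : T ∈ univ) => Finset.sum_comm (γ := Fin k → ZMod n))]
  have h2 : ∀ T S : Fin k → ZMod n,
      ∑ x : Fin k → ZMod n, (c T * (starRingEnd ℂ) (c S)) *
          (cayleyChar T x * (starRingEnd ℂ) (cayleyChar S x))
      = if T = S then (c T * (starRingEnd ℂ) (c S)) * (n : ℂ) ^ k else 0 := by
    intro T S
    rw [← Finset.mul_sum, sum_char]
    split_ifs <;> simp
  rw [Finset.sum_congr rfl (fun T _ => Finset.sum_congr rfl (fun S _ => h2 T S))]
  rw [Finset.mul_sum]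
  refine Finset.sum_congr rfl fun T _ => ?_
  rw [Finset.sum_ite_eq univ T (fun S => (c T * (starRingEnd ℂ) (c S)) * (n : ℂ) ^ k)]
  simp [Complex.mul_conj]
  ring

lemma parsevalR (n k : ℕ) [NeZero n] (c : (Fin k → ZMod n) → ℂ) :
    ∑ x : Fin k → ZMod n, Complex.normSq (∑ T, c T * cayleyChar T x)
      = (n : ℝ) ^ k * ∑ T, Complex.normSq (c T) := by
  have := parsevalC n k c
  exact_mod_cast this

lemma cayleyChar_comp {n k : ℕ} (π : Equiv.Perm (Fin k)) (T z : Fin k → ZMod n) :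
    cayleyChar (T ∘ π) z = cayleyChar T (z ∘ π.symm) := by
  rw [cayleyChar_eq, cayleyChar_eq]
  rw [← Equiv.prod_comp π (fun j => ec n (T j) ((z ∘ π.symm) j))]
  simp [Function.comp]

lemma fCoeff_comp (n ℓ : ℕ) [NeZero n] (F : (Fin ℓ → ZMod n) → ℝ)
    (hinv : ∀ (π : Equiv.Perm (Fin ℓ)) (x : Fin ℓ → ZMod n), F (x ∘ π) = F x)
    (π : Equiv.Perm (Fin ℓ)) (T : Fin ℓ → ZMod n) :
    fCoeff n ℓ F (T ∘ π) = fCoeff n ℓ F T := by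
  unfold fCoeff
  congr 1
  rw [← Equiv.sum_comp (Equiv.arrowCongr π.symm (Equiv.refl (ZMod n)))
    (fun x => (F x : ℂ) * (starRingEnd ℂ) (cayleyChar (T ∘ π) x))]
  refine Finset.sum_congr rfl fun y _ => ?_
  have h1 : (Equiv.arrowCongr π.symm (Equiv.refl (ZMod n))) y = y ∘ π := by
    funext j; simp [Equiv.arrowCongr]
  rw [h1, cayleyChar_comp]
  have h2 : (y ∘ π) ∘ π.symm = y := by funext j; simp
  rw [h2, hinv π y]

def permOf {ℓ i : ℕ} (hi : i ≤ ℓ) (S : Finset (Fin ℓ)) (hS : S.card = i) : Equiv.Perm (Fin ℓ) :=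
  (finCongr (Nat.add_sub_cancel' hi).symm).trans <|
  finSumFinEquiv.symm.trans <|
  (Equiv.sumCongr (S.orderIsoOfFin hS).toEquiv
    (((Sᶜ).orderIsoOfFin (by simp [Finset.card_compl, hS])).toEquiv.trans
      (Equiv.subtypeEquivRight (fun x => Finset.mem_compl)))).trans <|
  Equiv.sumCompl (· ∈ S)

lemma permOf_mem {ℓ i : ℕ} (hi : i ≤ ℓ) (S : Finset (Fin ℓ)) (hS : S.card = i) (j : Fin ℓ) :
    permOf hi S hS j ∈ S ↔ (j : ℕ) < i := by
  unfold permOf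
  by_cases hj : (j : ℕ) < i
  · have h1 : (finCongr (Nat.add_sub_cancel' hi).symm) j = Fin.castAdd (ℓ - i) ⟨(j : ℕ), hj⟩ := by
      ext; simp
    simp only [Equiv.trans_apply, h1, finSumFinEquiv_symm_apply_castAdd]
    simp [hj, Equiv.sumCompl_apply_inl, Finset.coe_mem]
  · have h1 : (finCongr (Nat.add_sub_cancel' hi).symm) j
        = Fin.natAdd i ⟨(j : ℕ) - i, by have := j.isLt; omega⟩ := by
      ext; simp; omega
    simp only [Equiv.trans_apply, h1, finSumFinEquiv_symm_apply_natAdd]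
    simp only [Equiv.sumCongr_apply, Sum.map_inr, Equiv.sumCompl_apply_inr]
    have hcS : (Sᶜ : Finset (Fin ℓ)).card = ℓ - i := by simp [Finset.card_compl, hS]
    have h2 : ((((Sᶜ).orderIsoOfFin hcS) ⟨(j : ℕ) - i, by have := j.isLt; omega⟩ : Fin ℓ)) ∈ Sᶜ :=
      Finset.coe_mem _
    rw [Finset.mem_compl] at h2
    simpa [hj] using h2

lemma sum_fiber_eq (n ℓ i : ℕ) [NeZero n] (hi : i ≤ ℓ) (g : (Fin ℓ → ZMod n) → ℝ)
    (hg : ∀ (π : Equiv.Perm (Fin ℓ)) (T : Fin ℓ → ZMod n), g (T ∘ π) = g T)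
    (S : Finset (Fin ℓ)) (hS : S.card = i) :
    ∑ T ∈ univ.filter (fun T : Fin ℓ → ZMod n => univ.filter (fun j => T j ≠ 0) = S), g T
      = ∑ T ∈ univ.filter (fun T : Fin ℓ → ZMod n =>
          univ.filter (fun j => T j ≠ 0) = univ.filter (fun j : Fin ℓ => (j : ℕ) < i)), g T := by
  set σ := permOf hi S hS with hσ
  refine Finset.sum_nbij' (fun T => T ∘ σ) (fun T => T ∘ σ.symm) ?_ ?_ ?_ ?_ ?_
  · intro T hT
    simp only [Finset.mem_filter, Finset.mem_univ, true_and, Finset.ext_iff,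
      Finset.mem_filter] at hT ⊢
    intro j
    rw [Function.comp_apply, hT (σ j)]
    exact permOf_mem hi S hS j
  · intro T hT
    simp only [Finset.mem_filter, Finset.mem_univ, true_and, Finset.ext_iff,
      Finset.mem_filter] at hT ⊢
    intro x
    rw [Function.comp_apply, hT (σ.symm x)]
    have h2 := permOf_mem hi S hS (σ.symm x)
    rw [← hσ, Equiv.apply_symm_apply] at h2
    exact h2.symm
  · intro T _; funext j; simp
  · intro T _; funext j; simp
  · intro T _; exact (hg σ T).symm

lemma sum_level (n ℓ i : ℕ) [NeZero n] (hi : i ≤ ℓ) (g : (Fin ℓ → ZMod n) → ℝ)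
    (hg : ∀ (π : Equiv.Perm (Fin ℓ)) (T : Fin ℓ → ZMod n), g (T ∘ π) = g T) :
    ∑ T ∈ univ.filter (fun T : Fin ℓ → ZMod n => (univ.filter fun j => T j ≠ 0).card = i), g T
      = (ℓ.choose i : ℝ) * ∑ T ∈ univ.filter (fun T : Fin ℓ → ZMod n =>
          univ.filter (fun j => T j ≠ 0) = univ.filter (fun j : Fin ℓ => (j : ℕ) < i)), g T := by
  have hmap : ∀ T ∈ univ.filter (fun T : Fin ℓ → ZMod n =>
      (univ.filter fun j => T j ≠ 0).card = i),
      (univ.filter fun j => T j ≠ 0) ∈ Finset.powersetCard i (univ : Finset (Fin ℓ)) := by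
    intro T hT
    rw [Finset.mem_powersetCard_univ]
    simpa using hT
  rw [← Finset.sum_fiberwise_of_maps_to hmap g]
  have hinner : ∀ S ∈ Finset.powersetCard i (univ : Finset (Fin ℓ)),
      ∑ T ∈ (univ.filter (fun T : Fin ℓ → ZMod n =>
          (univ.filter fun j => T j ≠ 0).card = i)).filter
            (fun T => univ.filter (fun j => T j ≠ 0) = S), g T
      = ∑ T ∈ univ.filter (fun T : Fin ℓ → ZMod n =>
          univ.filter (fun j => T j ≠ 0) = univ.filter (fun j : Fin ℓ => (j : ℕ) < i)), g T := by
    intro S hS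
    rw [Finset.mem_powersetCard_univ] at hS
    rw [Finset.filter_filter]
    have hpred : ∀ T : Fin ℓ → ZMod n,
        (((univ.filter fun j => T j ≠ 0).card = i ∧ univ.filter (fun j => T j ≠ 0) = S))
          ↔ univ.filter (fun j => T j ≠ 0) = S := by
      intro T
      constructor
      · exact fun h => h.2
      · intro h; exact ⟨by rw [h, hS], h⟩
    rw [Finset.filter_congr (fun T _ => hpred T)]
    exact sum_fiber_eq n ℓ i hi g hg S hS
  rw [Finset.sum_congr rfl hinner, Finset.sum_const, Finset.card_powersetCard,
    Finset.card_univ, Fintype.card_fin, nsmul_eq_mul]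

lemma sum_first_eq (n ℓ i : ℕ) [NeZero n] (hi : i ≤ ℓ) (g : (Fin ℓ → ZMod n) → ℝ) :
    ∑ T ∈ univ.filter (fun T : Fin ℓ → ZMod n =>
        univ.filter (fun j => T j ≠ 0) = univ.filter (fun j : Fin ℓ => (j : ℕ) < i)), g T
      = ∑ T' ∈ univ.filter (fun T' : Fin i → ZMod n => ∀ j, T' j ≠ 0),
          g (padTuple n ℓ i T') := by
  refine Finset.sum_nbij' (fun T => fun j : Fin i => T ⟨(j : ℕ), lt_of_lt_of_le j.isLt hi⟩)
    (fun T' => padTuple n ℓ i T') ?_ ?_ ?_ ?_ ?_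
  · intro T hT
    simp only [Finset.mem_filter, Finset.mem_univ, true_and, Finset.ext_iff,
      Finset.mem_filter] at hT ⊢
    intro j
    exact (hT ⟨(j : ℕ), lt_of_lt_of_le j.isLt hi⟩).mpr j.isLt
  · intro T' hT'
    simp only [Finset.mem_filter, Finset.mem_univ, true_and, Finset.ext_iff,
      Finset.mem_filter] at hT' ⊢
    intro j
    unfold padTuple
    by_cases hj : (j : ℕ) < i
    · simp [hj, hT' ⟨(j : ℕ), hj⟩]
    · simp [hj]
  · intro T hT
    simp only [Finset.mem_filter, Finset.mem_univ, true_and, Finset.ext_iff,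
      Finset.mem_filter] at hT
    funext j
    unfold padTuple
    by_cases hj : (j : ℕ) < i
    · simp only [hj, dif_pos]
    · simp only [hj, dif_neg, not_false_iff]
      by_contra hne
      first
      | exact hj ((hT j).mp (fun h => hne h))
      | exact hj ((hT j).mp (fun h => hne (by rw [h])))
  · intro T' _
    funext j
    simp [padTuple, j.isLt]
  · intro T hT
    simp only [Finset.mem_filter, Finset.mem_univ, true_and, Finset.ext_iff,
      Finset.mem_filter] at hT
    congr 1
    funext j
    unfold padTuple
    by_cases hj : (j : ℕ) < i
    · simp only [hj, dif_pos]
    · simp only [hj, dif_neg, not_false_iff]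
      by_contra hne
      first
      | exact hj ((hT j).mp (fun h => hne h))
      | exact hj ((hT j).mp (fun h => hne (by rw [h])))

/-- `E_{X∈(ℤ/nℤ)^i}[f_{i,F}(X)²] = η_i / C(ℓ,i)` where `η_i = E[F_i²]` is the
level-`i` Fourier weight of `F`. -/
theorem juntaPart_second_moment (n ℓ i : ℕ) [NeZero n] (hi : i ≤ ℓ)
    (F : (Fin ℓ → ZMod n) → ℝ)
    (hinv : ∀ (π : Equiv.Perm (Fin ℓ)) (x : Fin ℓ → ZMod n), F (x ∘ π) = F x) :
    (1 / (n : ℝ) ^ i) * ∑ x : Fin i → ZMod n, Complex.normSq (juntaPart n ℓ i F x)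
      = ((1 / (n : ℝ) ^ ℓ) * ∑ X : Fin ℓ → ZMod n, Complex.normSq (levelPart n ℓ i F X))
          / (ℓ.choose i : ℝ) := by
  classical
  have hn : (n : ℝ) ≠ 0 := Nat.cast_ne_zero.mpr (NeZero.ne n)
  have hch : (ℓ.choose i : ℝ) ≠ 0 := Nat.cast_ne_zero.mpr (Nat.choose_pos hi).ne'
  -- coefficient functions
  set c : (Fin i → ZMod n) → ℂ := fun T =>
    if (∀ j, T j ≠ 0) then fCoeff n ℓ F (padTuple n ℓ i T) else 0 with hc
  set d : (Fin ℓ → ZMod n) → ℂ := fun T =>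
    if (univ.filter fun j => T j ≠ 0).card = i then fCoeff n ℓ F T else 0 with hd
  have hjun : ∀ x : Fin i → ZMod n, juntaPart n ℓ i F x = ∑ T, c T * cayleyChar T x := by
    intro x
    rw [juntaPart, Finset.sum_filter]
    refine Finset.sum_congr rfl fun T _ => ?_
    simp only [hc]
    by_cases h : ∀ j, T j ≠ 0 <;> simp [h]
  have hlev : ∀ X : Fin ℓ → ZMod n, levelPart n ℓ i F X = ∑ T, d T * cayleyChar T X := by
    intro X
    rw [levelPart, Finset.sum_filter]
    refine Finset.sum_congr rfl fun T _ => ?_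
    simp only [hd]
    by_cases h : (univ.filter fun j => T j ≠ 0).card = i <;> simp [h]
  -- Parseval on both sides
  have hP1 : ∑ x : Fin i → ZMod n, Complex.normSq (juntaPart n ℓ i F x)
      = (n : ℝ) ^ i * ∑ T, Complex.normSq (c T) := by
    rw [Finset.sum_congr rfl (fun x _ => by rw [hjun x])]
    exact parsevalR n i c
  have hP2 : ∑ X : Fin ℓ → ZMod n, Complex.normSq (levelPart n ℓ i F X)
      = (n : ℝ) ^ ℓ * ∑ T, Complex.normSq (d T) := by
    rw [Finset.sum_congr rfl (fun X _ => by rw [hlev X])]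
    exact parsevalR n ℓ d
  -- identify the coefficient sums with filtered sums
  have hc1 : ∑ T, Complex.normSq (c T)
      = ∑ T ∈ univ.filter (fun T : Fin i → ZMod n => ∀ j, T j ≠ 0),
          Complex.normSq (fCoeff n ℓ F (padTuple n ℓ i T)) := by
    rw [Finset.sum_filter]
    refine Finset.sum_congr rfl fun T _ => ?_
    simp only [hc]
    by_cases h : ∀ j, T j ≠ 0 <;> simp [h]
  have hd1 : ∑ T, Complex.normSq (d T)
      = ∑ T ∈ univ.filter
          (fun T : Fin ℓ → ZMod n => (univ.filter fun j => T j ≠ 0).card = i),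
          Complex.normSq (fCoeff n ℓ F T) := by
    rw [Finset.sum_filter]
    refine Finset.sum_congr rfl fun T _ => ?_
    simp only [hd]
    by_cases h : (univ.filter fun j => T j ≠ 0).card = i <;> simp [h]
  -- the combinatorial identity
  have hg : ∀ (π : Equiv.Perm (Fin ℓ)) (T : Fin ℓ → ZMod n),
      Complex.normSq (fCoeff n ℓ F (T ∘ π)) = Complex.normSq (fCoeff n ℓ F T) := by
    intro π T
    rw [fCoeff_comp n ℓ F hinv π T]
  have hcomb : ∑ T ∈ univ.filter
        (fun T : Fin ℓ → ZMod n => (univ.filter fun j => T j ≠ 0).card = i),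
        Complex.normSq (fCoeff n ℓ F T)
      = (ℓ.choose i : ℝ) * ∑ T ∈ univ.filter (fun T : Fin i → ZMod n => ∀ j, T j ≠ 0),
          Complex.normSq (fCoeff n ℓ F (padTuple n ℓ i T)) := by
    rw [sum_level n ℓ i hi (fun T => Complex.normSq (fCoeff n ℓ F T)) hg,
      sum_first_eq n ℓ i hi (fun T => Complex.normSq (fCoeff n ℓ F T))]
  rw [hP1, hP2, hc1, hd1, hcomb]
  field_simp
end

section
/- Let F : Ω → ℝ be a function on a finite probability space, i ∈ ℕ, and let F_i be the projection of F onto a subspace orthogonal complement-decomposed as F = Σ_j F_j with ⟨F_j, F_k⟩ = 0 for j ≠ k. Set η_i = E[F_i²]. Then for every ε > 0: E[F_i⁴] ≥ 4ε³η_i − 3ε⁴·E[F] + B, where B = 4ε³·E[(F³ − F)F_i] + 3ε⁴·E[F − F⁴]. In particular, if F is {0,1}-valued (so F³ = F and F⁴ = F), then E[F_i⁴] ≥ 4ε³η_i − 3ε⁴E[F]. -/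
/-- Lower bound on the fourth moment of an orthogonal component of `F`. -/
theorem fourth_moment_lower_bound {Ω : Type*} [Fintype Ω]
    (μ : Ω → ℝ) (hμ0 : ∀ x, 0 ≤ μ x) (hμ1 : ∑ x, μ x = 1)
    (m : ℕ) (Fj : Fin m → Ω → ℝ) (F : Ω → ℝ)
    (hdecomp : ∀ x, F x = ∑ j, Fj j x)
    (horth : ∀ j k, j ≠ k → ∑ x, μ x * (Fj j x * Fj k x) = 0)
    (i : Fin m) :
    (∀ ε : ℝ, 0 < ε →
      4 * ε ^ 3 * (∑ x, μ x * (Fj i x) ^ 2) - 3 * ε ^ 4 * (∑ x, μ x * F x)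
          + (4 * ε ^ 3 * (∑ x, μ x * ((F x ^ 3 - F x) * Fj i x))
             + 3 * ε ^ 4 * (∑ x, μ x * (F x - F x ^ 4)))
        ≤ ∑ x, μ x * (Fj i x) ^ 4) ∧
    ((∀ x, F x = 0 ∨ F x = 1) → ∀ ε : ℝ, 0 < ε →
      4 * ε ^ 3 * (∑ x, μ x * (Fj i x) ^ 2) - 3 * ε ^ 4 * (∑ x, μ x * F x)
        ≤ ∑ x, μ x * (Fj i x) ^ 4) := by
  -- η_i = E[F · F_i]
  have key1 : ∑ x, μ x * (F x * Fj i x) = ∑ x, μ x * (Fj i x) ^ 2 := by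
    have : ∀ x, μ x * (F x * Fj i x) = ∑ j, μ x * (Fj j x * Fj i x) := by
      intro x
      rw [hdecomp x, Finset.sum_mul, Finset.mul_sum]
    simp_rw [this]
    rw [Finset.sum_comm]
    rw [Finset.sum_eq_single i]
    · congr 1; ext x; ring
    · intro j _ hj; exact horth j i hj
    · simp
  have main : ∀ ε : ℝ, 0 < ε →
      4 * ε ^ 3 * (∑ x, μ x * (Fj i x) ^ 2) - 3 * ε ^ 4 * (∑ x, μ x * F x)
          + (4 * ε ^ 3 * (∑ x, μ x * ((F x ^ 3 - F x) * Fj i x))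
             + 3 * ε ^ 4 * (∑ x, μ x * (F x - F x ^ 4)))
        ≤ ∑ x, μ x * (Fj i x) ^ 4 := by
    intro ε hε
    have hpt : ∀ x, μ x * (4 * ε ^ 3 * (F x ^ 3 * Fj i x) - 3 * ε ^ 4 * F x ^ 4)
        ≤ μ x * (Fj i x) ^ 4 := by
      intro x
      apply mul_le_mul_of_nonneg_left _ (hμ0 x)
      nlinarith [sq_nonneg (ε * F x - Fj i x), sq_nonneg (ε * F x),
        sq_nonneg (ε * F x + Fj i x), sq_nonneg (Fj i x)]
    have hsum := Finset.sum_le_sum (s := Finset.univ) (fun x _ => hpt x)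
    have expand : ∑ x, μ x * (4 * ε ^ 3 * (F x ^ 3 * Fj i x) - 3 * ε ^ 4 * F x ^ 4)
        = 4 * ε ^ 3 * (∑ x, μ x * (F x ^ 3 * Fj i x))
          - 3 * ε ^ 4 * (∑ x, μ x * F x ^ 4) := by
      rw [Finset.mul_sum, Finset.mul_sum, ← Finset.sum_sub_distrib]
      congr 1; ext x; ring
    have h1 : ∑ x, μ x * ((F x ^ 3 - F x) * Fj i x)
        = (∑ x, μ x * (F x ^ 3 * Fj i x)) - ∑ x, μ x * (F x * Fj i x) := by
      rw [← Finset.sum_sub_distrib]; congr 1; ext x; ring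
    have h2 : ∑ x, μ x * (F x - F x ^ 4)
        = (∑ x, μ x * F x) - ∑ x, μ x * F x ^ 4 := by
      rw [← Finset.sum_sub_distrib]; congr 1; ext x; ring
    rw [h1, h2, key1]
    rw [expand] at hsum
    linarith [hsum]
  refine ⟨main, fun hF ε hε => ?_⟩
  have hz1 : ∑ x, μ x * ((F x ^ 3 - F x) * Fj i x) = 0 := by
    apply Finset.sum_eq_zero; intro x _
    rcases hF x with h | h <;> rw [h] <;> ring
  have hz2 : ∑ x, μ x * (F x - F x ^ 4) = 0 := by
    apply Finset.sum_eq_zero; intro x _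
    rcases hF x with h | h <;> rw [h] <;> ring
  have := main ε hε
  rw [hz1, hz2] at this
  linarith
end

section
/- Let p : [0,1] → [0,1] satisfy p(x) ≤ ν² for x ∈ [0,β] and p(x) ≥ 1−ν² for x ∈ [β+ν², 1], for some β ∈ (0,1) and 0 < ν with β+ν ≤ 1. For c ∈ {0, 1, …, ⌊1/ν⌋}, let p^c be such an approximate threshold at β + cν² with accuracy ν². Then for every δ ∈ [0,1]: E_{c uniform in {0,…,⌊1/ν⌋}}[p^c(δ) − p^c(δ)²] ≤ O(ν). (Concretely: at most one index c has p^c(δ) − p^c(δ)² > 2ν², while each term is at most 1/4, so the average is at most ν·(1/4)/(1) + 2ν² ≤ O(ν).) -/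
/-- Averaging the non-Booleanity of a family of shifted approximate threshold
functions over the shifts makes it `O(ν)` at every fixed point `δ`. -/
theorem averaged_threshold_non_booleanity (β ν : ℝ)
    (hβ : 0 < β ∧ β < 1) (hν : 0 < ν) (hβν : β + ν ≤ 1)
    (p : ℕ → ℝ → ℝ)
    (hrange : ∀ c ≤ ⌊1/ν⌋₊, ∀ x ∈ Set.Icc (0:ℝ) 1, 0 ≤ p c x ∧ p c x ≤ 1)
    (hlow : ∀ c ≤ ⌊1/ν⌋₊, ∀ x ∈ Set.Icc (0:ℝ) (β + (c:ℝ) * ν^2), p c x ≤ ν^2)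
    (hhigh : ∀ c ≤ ⌊1/ν⌋₊, ∀ x ∈ Set.Icc (β + ((c:ℝ)+1) * ν^2) 1, 1 - ν^2 ≤ p c x)
    (δ : ℝ) (hδ : δ ∈ Set.Icc (0:ℝ) 1) :
    (1 / ((⌊1/ν⌋₊ : ℝ) + 1)) * ∑ c ∈ Finset.range (⌊1/ν⌋₊ + 1), (p c δ - (p c δ)^2)
      ≤ ν / 4 + 2 * ν^2 := by
  set N := ⌊1/ν⌋₊ with hN
  obtain ⟨hδ0, hδ1⟩ := hδ
  have hν2 : (0:ℝ) < ν^2 := by positivity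
  -- the (at most one) bad index
  set c₀ : ℕ := ⌊(δ - β)/ν^2⌋₊ with hc₀
  -- pointwise bound on each term
  have key : ∀ c ∈ Finset.range (N + 1),
      p c δ - (p c δ)^2 ≤ ν^2 + (if c = c₀ then (1/4:ℝ) else 0) := by
    intro c hc
    have hcN : c ≤ N := Nat.lt_succ_iff.mp (Finset.mem_range.mp hc)
    obtain ⟨hp0, hp1⟩ := hrange c hcN δ ⟨hδ0, hδ1⟩
    by_cases hceq : c = c₀
    · rw [if_pos hceq]
      nlinarith [sq_nonneg (p c δ - 1/2)]
    · simp only [if_neg hceq, add_zero]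
      have hsplit : δ ≤ β + (c:ℝ) * ν^2 ∨ β + ((c:ℝ)+1) * ν^2 ≤ δ := by
        by_contra h
        push_neg at h
        obtain ⟨h1, h2⟩ := h
        have hl : (c:ℝ) ≤ (δ - β)/ν^2 := by
          rw [le_div_iff₀ hν2]; linarith
        have hr : (δ - β)/ν^2 < (c:ℝ) + 1 := by
          rw [div_lt_iff₀ hν2]; nlinarith
        have : c₀ = c := by
          rw [hc₀, Nat.floor_eq_iff (le_trans (Nat.cast_nonneg c) hl)]
          exact ⟨hl, by push_cast; exact hr⟩
        exact hceq this.symm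
      rcases hsplit with h | h
      · have := hlow c hcN δ ⟨hδ0, h⟩
        nlinarith [sq_nonneg (p c δ)]
      · have := hhigh c hcN δ ⟨h, hδ1⟩
        nlinarith
  have hsum : ∑ c ∈ Finset.range (N + 1), (p c δ - (p c δ)^2)
      ≤ ((N:ℝ) + 1) * ν^2 + 1/4 := by
    calc ∑ c ∈ Finset.range (N + 1), (p c δ - (p c δ)^2)
        ≤ ∑ c ∈ Finset.range (N + 1), (ν^2 + (if c = c₀ then (1/4:ℝ) else 0)) :=
          Finset.sum_le_sum key
      _ = ((N:ℝ) + 1) * ν^2 + ∑ c ∈ Finset.range (N + 1), (if c = c₀ then (1/4:ℝ) else 0) := by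
          rw [Finset.sum_add_distrib, Finset.sum_const, Finset.card_range]
          push_cast; ring
      _ ≤ ((N:ℝ) + 1) * ν^2 + 1/4 := by
          gcongr
          rw [Finset.sum_ite_eq' (Finset.range (N+1)) c₀ (fun _ => (1/4:ℝ))]
          split <;> norm_num
  have hNpos : (0:ℝ) < (N:ℝ) + 1 := by positivity
  have hNν : 1/ν < (N:ℝ) + 1 := by
    rw [hN]; exact_mod_cast Nat.lt_floor_add_one (1/ν)
  have hinv : 1/((N:ℝ)+1) ≤ ν := by
    rw [div_le_iff₀ hNpos]
    rw [div_lt_iff₀ hν] at hNν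
    nlinarith
  calc (1/((N:ℝ)+1)) * ∑ c ∈ Finset.range (N + 1), (p c δ - (p c δ)^2)
      ≤ (1/((N:ℝ)+1)) * (((N:ℝ) + 1) * ν^2 + 1/4) := by
        apply mul_le_mul_of_nonneg_left hsum (by positivity)
    _ = ν^2 + (1/((N:ℝ)+1)) * (1/4) := by field_simp
    _ ≤ ν^2 + ν * (1/4) := by gcongr
    _ ≤ ν / 4 + 2 * ν^2 := by nlinarith
end

section
/- Let G be a finite graph with normalized adjacency operator T that is positive semidefinite, and let S be a set of vertices with indicator F = 1_S. Let S̃ be any set of vertices and G' = 1_{S∩ complement(S̃)}. If the edge expansion of S ∩ complement(S̃) satisfies Φ(S ∩ complement(S̃)) ≥ 1 − η²/100 (i.e. ⟨G', T G'⟩ ≤ (η²/100)·μ(S∩complement(S̃)) where μ is the stationary measure), then Pr over a random edge (L,L') of G of the event [L, L' ∈ S and (L ∉ S̃ or L' ∉ S̃)] is at most (η/5)·μ(S). -/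
/-- If the residual pseudorandom part `S ∖ S̃` of a set `S` expands almost fully in a
graph whose normalized adjacency operator is PSD, then few edges lie inside `S` with
an endpoint outside `S̃`. -/
theorem edges_outside_cover_bound {V : Type*} [Fintype V] [DecidableEq V]
    (μ : V → ℝ) (hμ0 : ∀ x, 0 ≤ μ x) (hμ1 : ∑ x, μ x = 1)
    (T : Matrix V V ℝ)
    (hT0 : ∀ x y, 0 ≤ T x y)
    (hTstoch : ∀ x, ∑ y, T x y = 1)
    (hTrev : ∀ x y, μ x * T x y = μ y * T y x)
    (hTpsd : ∀ f : V → ℝ, 0 ≤ ∑ x, μ x * (f x * T.mulVec f x))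
    (S Stilde : Finset V) (η : ℝ) (hη : 0 ≤ η)
    (G' : V → ℝ) (hG' : G' = fun x => if x ∈ S \ Stilde then (1:ℝ) else 0)
    (F : V → ℝ) (hF : F = fun x => if x ∈ S then (1:ℝ) else 0)
    (hexp : ∑ x, μ x * (G' x * T.mulVec G' x) ≤ η^2/100 * ∑ x ∈ S \ Stilde, μ x) :
    ∑ x, ∑ y, μ x * T x y *
        (if x ∈ S ∧ y ∈ S ∧ (x ∉ Stilde ∨ y ∉ Stilde) then (1:ℝ) else 0)
      ≤ η / 5 * ∑ x ∈ S, μ x := by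
  classical
  set B : (V → ℝ) → (V → ℝ) → ℝ :=
    fun f g => ∑ x, ∑ y, μ x * T x y * (f x * g y) with hBdef
  have hquad : ∀ f : V → ℝ, ∑ x, μ x * (f x * T.mulVec f x) = B f f := by
    intro f
    simp only [hBdef, Matrix.mulVec, dotProduct]
    refine Finset.sum_congr rfl fun x _ => ?_
    rw [Finset.mul_sum, Finset.mul_sum]
    exact Finset.sum_congr rfl fun y _ => by ring
  have hsymm : ∀ f g : V → ℝ, B f g = B g f := by
    intro f g
    simp only [hBdef]
    rw [Finset.sum_comm]
    refine Finset.sum_congr rfl fun x _ => Finset.sum_congr rfl fun y _ => ?_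
    rw [hTrev]; ring
  have hpsd : ∀ f : V → ℝ, 0 ≤ B f f := fun f => (hquad f) ▸ hTpsd f
  -- nonnegativity and boundedness of the indicators
  have hG0 : ∀ x, 0 ≤ G' x := by intro x; rw [hG']; dsimp; split_ifs <;> norm_num
  have hF0 : ∀ x, 0 ≤ F x := by intro x; rw [hF]; dsimp; split_ifs <;> norm_num
  have hF1 : ∀ x, F x ≤ 1 := by intro x; rw [hF]; dsimp; split_ifs <;> norm_num
  set a := B G' G' with ha_def
  set b := B G' F with hb_def
  set c := B F F with hc_def
  have ha : a ≤ η^2/100 * ∑ x ∈ S \ Stilde, μ x := by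
    rw [ha_def, ← hquad]; exact hexp
  have hc : c ≤ ∑ x ∈ S, μ x := by
    rw [hc_def]
    calc B F F ≤ ∑ x, ∑ y, μ x * T x y * F x := by
          refine Finset.sum_le_sum fun x _ => Finset.sum_le_sum fun y _ => ?_
          have h1 : F x * F y ≤ F x := by
            nlinarith [hF0 x, hF0 y, hF1 y]
          have h2 : 0 ≤ μ x * T x y := mul_nonneg (hμ0 x) (hT0 x y)
          exact mul_le_mul_of_nonneg_left h1 h2
      _ = ∑ x, μ x * F x := by
          refine Finset.sum_congr rfl fun x _ => ?_
          rw [← Finset.sum_mul, ← Finset.mul_sum, hTstoch x, mul_one]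
      _ = ∑ x ∈ S, μ x := by
          rw [hF]
          simp [mul_ite, mul_one, mul_zero, Finset.sum_ite_mem]
  -- Cauchy-Schwarz for the PSD bilinear form
  have key : ∀ t : ℝ, 0 ≤ c * t^2 + (2*b) * t + a := by
    intro t
    have h0 := hpsd (fun x => G' x + t * F x)
    have hx : B (fun x => G' x + t * F x) (fun x => G' x + t * F x)
        = a + t * B G' F + t * B F G' + t^2 * c := by
      simp only [hBdef, ha_def, hc_def]
      have hpt : ∀ x y : V, μ x * T x y * ((G' x + t * F x) * (G' y + t * F y))
          = μ x * T x y * (G' x * G' y) + t * (μ x * T x y * (G' x * F y))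
            + t * (μ x * T x y * (F x * G' y)) + t^2 * (μ x * T x y * (F x * F y)) := by
        intro x y; ring
      simp only [hpt, Finset.sum_add_distrib, ← Finset.mul_sum]
    rw [hx, hsymm F G', ← hb_def] at h0
    linarith
  have key' : ∀ t : ℝ, 0 ≤ c * (t * t) + (2*b) * t + a := by
    intro t; nlinarith [key t]
  have hdisc := discrim_le_zero key'
  rw [discrim] at hdisc
  have hb2 : b^2 ≤ a * c := by nlinarith
  -- combine: b ≤ η/10 * μ(S)
  have hμS' : ∑ x ∈ S \ Stilde, μ x ≤ ∑ x ∈ S, μ x :=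
    Finset.sum_le_sum_of_subset_of_nonneg (Finset.sdiff_subset) (fun x _ _ => hμ0 x)
  have hμS0 : 0 ≤ ∑ x ∈ S, μ x := Finset.sum_nonneg fun x _ => hμ0 x
  have hc0 : 0 ≤ c := hc_def ▸ hpsd F
  have ha0 : 0 ≤ a := ha_def ▸ hpsd G'
  have hA : a ≤ η^2/100 * ∑ x ∈ S, μ x := by
    refine le_trans ha ?_
    have : (0:ℝ) ≤ η^2/100 := by positivity
    exact mul_le_mul_of_nonneg_left hμS' this
  have hk0 : 0 ≤ η/10 * ∑ x ∈ S, μ x := by positivity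
  have hac : a * c ≤ (η/10 * ∑ x ∈ S, μ x) * (η/10 * ∑ x ∈ S, μ x) := by
    have := mul_le_mul hA hc hc0 (by positivity : (0:ℝ) ≤ η^2/100 * ∑ x ∈ S, μ x)
    nlinarith [this]
  have hbb : b ≤ η/10 * ∑ x ∈ S, μ x := by
    nlinarith [hb2, hac, hk0, sq_nonneg (b - η/10 * ∑ x ∈ S, μ x)]
  -- pointwise bound on the indicator
  have hpoint : ∀ x y : V, μ x * T x y *
      (if x ∈ S ∧ y ∈ S ∧ (x ∉ Stilde ∨ y ∉ Stilde) then (1:ℝ) else 0)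
      ≤ μ x * T x y * (G' x * F y) + μ x * T x y * (F x * G' y) := by
    intro x y
    have h2 : 0 ≤ μ x * T x y := mul_nonneg (hμ0 x) (hT0 x y)
    by_cases h : x ∈ S ∧ y ∈ S ∧ (x ∉ Stilde ∨ y ∉ Stilde)
    · obtain ⟨hxS, hyS, hout⟩ := h
      rw [if_pos ⟨hxS, hyS, hout⟩]
      have hval : (1:ℝ) ≤ G' x * F y + F x * G' y := by
        rw [hG', hF]
        simp only [Finset.mem_sdiff, hxS, hyS, true_and, if_true]
        rcases hout with h1 | h1 <;> simp [h1] <;> split_ifs <;> norm_num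
      calc μ x * T x y * 1 ≤ μ x * T x y * (G' x * F y + F x * G' y) :=
            mul_le_mul_of_nonneg_left hval h2
        _ = μ x * T x y * (G' x * F y) + μ x * T x y * (F x * G' y) := by ring
    · rw [if_neg h, mul_zero]
      have := mul_nonneg (hG0 x) (hF0 y)
      have := mul_nonneg (hF0 x) (hG0 y)
      positivity
  calc ∑ x, ∑ y, μ x * T x y *
        (if x ∈ S ∧ y ∈ S ∧ (x ∉ Stilde ∨ y ∉ Stilde) then (1:ℝ) else 0)
      ≤ ∑ x, ∑ y, (μ x * T x y * (G' x * F y) + μ x * T x y * (F x * G' y)) :=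
        Finset.sum_le_sum fun x _ => Finset.sum_le_sum fun y _ => hpoint x y
    _ = B G' F + B F G' := by
        simp only [hBdef, Finset.sum_add_distrib]
    _ = 2 * b := by rw [hsymm F G', ← hb_def]; ring
    _ ≤ η / 5 * ∑ x ∈ S, μ x := by linarith
end

section
/- Let Z₁, …, Z_m be random variables each taking values in [−1,1] with E[Z_a] = 0 for all a, and suppose the pairwise covariances satisfy E_{a,b∼[m]}[|Cov(Z_a, Z_b)|] ≤ τ'. Let E be an event with Pr[E] ≥ p, and let Z = E_{a∼[m]}[Z_a]. If E[Z | E] ≥ δ, then τ' ≥ p·δ². (Consequently, if the average pairwise covariance is at most τ', then conditioning on any event of probability ≥ p cannot shift the average of the Z_a's by more than √(τ'/p).) -/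
/-- Conditioning on an event of probability at least `p` cannot shift the average of
centered, bounded, almost pairwise-uncorrelated random variables by more than
`√(τ'/p)`: if the conditional mean is at least `δ ≥ 0`, then `p·δ² ≤ τ'`. -/
theorem conditioning_does_not_introduce_correlations
    {Ω : Type*} [Fintype Ω]
    (μ : Ω → ℝ) (hμ0 : ∀ x, 0 ≤ μ x) (hμ1 : ∑ x, μ x = 1)
    (m : ℕ) (hm : 0 < m) (Z : Fin m → Ω → ℝ)
    (hbdd : ∀ a x, |Z a x| ≤ 1)
    (hmean : ∀ a, ∑ x, μ x * Z a x = 0)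
    (τ' : ℝ)
    (hcov : (1 / (m:ℝ)^2) * ∑ a, ∑ b,
        |(∑ x, μ x * (Z a x * Z b x)) -
          (∑ x, μ x * Z a x) * (∑ x, μ x * Z b x)| ≤ τ')
    (E : Finset Ω) (p δ : ℝ) (hp : 0 < p) (hδ : 0 ≤ δ)
    (hPrE : p ≤ ∑ x ∈ E, μ x)
    (hcond : δ ≤ (∑ x ∈ E, μ x * ((1/(m:ℝ)) * ∑ a, Z a x)) / (∑ x ∈ E, μ x)) :
    p * δ^2 ≤ τ' := by
  set Zbar : Ω → ℝ := fun x => (1/(m:ℝ)) * ∑ a, Z a x with hZbar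
  set PE : ℝ := ∑ x ∈ E, μ x with hPE
  have hPEpos : 0 < PE := lt_of_lt_of_le hp hPrE
  -- Step 1: second moment bounded by τ'
  have h2 : ∑ x, μ x * (Zbar x)^2 ≤ τ' := by
    have hmne : (m:ℝ) ≠ 0 := by positivity
    have keyx : ∀ x, μ x * (Zbar x)^2
        = (1/(m:ℝ)^2) * ∑ a, ∑ b, μ x * (Z a x * Z b x) := by
      intro x
      have hs : ∑ a, ∑ b, μ x * (Z a x * Z b x)
          = μ x * ((∑ a, Z a x) * (∑ b, Z b x)) := by
        rw [Finset.sum_mul_sum, Finset.mul_sum]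
        exact Finset.sum_congr rfl fun a _ => by rw [Finset.mul_sum]
      rw [hs]
      simp only [hZbar]
      ring
    have key : ∑ x, μ x * (Zbar x)^2
        = (1 / (m:ℝ)^2) * ∑ a, ∑ b, ∑ x, μ x * (Z a x * Z b x) := by
      simp_rw [keyx]
      rw [← Finset.mul_sum]
      congr 1
      rw [Finset.sum_comm]
      exact Finset.sum_congr rfl fun a _ => by rw [Finset.sum_comm]
    rw [key]
    refine le_trans ?_ hcov
    have : ∀ a b : Fin m, ∑ x, μ x * (Z a x * Z b x)
        ≤ |(∑ x, μ x * (Z a x * Z b x)) -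
          (∑ x, μ x * (Z a x)) * (∑ x, μ x * Z b x)| := by
      intro a b
      rw [hmean a, zero_mul, sub_zero]
      exact le_abs_self _
    have hsum : ∑ a, ∑ b, ∑ x, μ x * (Z a x * Z b x)
        ≤ ∑ a, ∑ b, |(∑ x, μ x * (Z a x * Z b x)) -
          (∑ x, μ x * (Z a x)) * (∑ x, μ x * Z b x)| :=
      Finset.sum_le_sum fun a _ => Finset.sum_le_sum fun b _ => this a b
    have hpos : (0:ℝ) ≤ 1 / (m:ℝ)^2 := by positivity
    exact mul_le_mul_of_nonneg_left hsum hpos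
  -- Step 2: Cauchy-Schwarz on E
  have hCS : (∑ x ∈ E, μ x * Zbar x)^2 ≤ PE * ∑ x ∈ E, μ x * (Zbar x)^2 := by
    have := Finset.sum_mul_sq_le_sq_mul_sq E (fun x => Real.sqrt (μ x))
      (fun x => Real.sqrt (μ x) * Zbar x)
    calc (∑ x ∈ E, μ x * Zbar x)^2
        = (∑ x ∈ E, Real.sqrt (μ x) * (Real.sqrt (μ x) * Zbar x))^2 := by
          rw [show (∑ x ∈ E, μ x * Zbar x)
              = ∑ x ∈ E, Real.sqrt (μ x) * (Real.sqrt (μ x) * Zbar x) from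
            Finset.sum_congr rfl fun x _ =>
              (by rw [← mul_assoc, Real.mul_self_sqrt (hμ0 x)] :
                Real.sqrt (μ x) * (Real.sqrt (μ x) * Zbar x) = μ x * Zbar x).symm]
      _ ≤ (∑ x ∈ E, Real.sqrt (μ x)^2) * ∑ x ∈ E, (Real.sqrt (μ x) * Zbar x)^2 := this
      _ = PE * ∑ x ∈ E, μ x * (Zbar x)^2 := by
          congr 1
          · apply Finset.sum_congr rfl; intro x _; exact Real.sq_sqrt (hμ0 x)
          · apply Finset.sum_congr rfl; intro x _
            rw [mul_pow, Real.sq_sqrt (hμ0 x)]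
  -- Step 3: combine
  have hE2 : ∑ x ∈ E, μ x * (Zbar x)^2 ≤ ∑ x, μ x * (Zbar x)^2 :=
    Finset.sum_le_sum_of_subset_of_nonneg (Finset.subset_univ E)
      (fun x _ _ => mul_nonneg (hμ0 x) (sq_nonneg _))
  have hδPE : δ * PE ≤ ∑ x ∈ E, μ x * Zbar x := by
    have := mul_le_mul_of_nonneg_right hcond (le_of_lt hPEpos)
    rwa [div_mul_cancel₀ _ (ne_of_gt hPEpos)] at this
  have hsq : (δ * PE)^2 ≤ (∑ x ∈ E, μ x * Zbar x)^2 := by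
    apply sq_le_sq' _ hδPE
    linarith [mul_nonneg hδ (le_of_lt hPEpos)]
  have : δ^2 * PE^2 ≤ PE * ∑ x, μ x * (Zbar x)^2 := by
    calc δ^2 * PE^2 = (δ * PE)^2 := by ring
      _ ≤ (∑ x ∈ E, μ x * Zbar x)^2 := hsq
      _ ≤ PE * ∑ x ∈ E, μ x * (Zbar x)^2 := hCS
      _ ≤ PE * ∑ x, μ x * (Zbar x)^2 := by
          exact mul_le_mul_of_nonneg_left hE2 (le_of_lt hPEpos)
  have hkey : δ^2 * PE ≤ ∑ x, μ x * (Zbar x)^2 := by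
    have hPE2 : δ^2 * PE * PE ≤ (∑ x, μ x * (Zbar x)^2) * PE := by
      nlinarith
    exact le_of_mul_le_mul_right hPE2 hPEpos
  calc p * δ^2 ≤ PE * δ^2 := by nlinarith [sq_nonneg δ]
    _ = δ^2 * PE := by ring
    _ ≤ ∑ x, μ x * (Zbar x)^2 := hkey
    _ ≤ τ' := h2
end

section
/- Let q : ℝ → ℝ be a polynomial of degree d that is non-negative on the interval [a,b]. Then q can be written in the form q(x) = s₀(x) + s₁(x)·(x−a) + s₂(x)·(b−x) + s₃(x)·(x−a)(b−x) where s₀, s₁, s₂, s₃ are sums of squares of polynomials and all summands have degree at most 2d. In particular, the non-negativity of q on [a,b] has a degree-2d sum-of-squares certificate from the axioms {x ≥ a, x ≤ b}. -/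
open Polynomial

def IsSumOfSquaresPoly (s : Polynomial ℝ) : Prop :=
  ∃ r : Multiset (Polynomial ℝ), s = (r.map (· ^ 2)).sum

lemma sos_zero : IsSumOfSquaresPoly 0 := ⟨0, by simp⟩

lemma sos_C {m : ℝ} (hm : 0 ≤ m) : IsSumOfSquaresPoly (C m) :=
  ⟨{C (Real.sqrt m)}, by simp [← C_pow, Real.sq_sqrt hm]⟩

lemma sos_add {s t : Polynomial ℝ} (hs : IsSumOfSquaresPoly s) (ht : IsSumOfSquaresPoly t) :
    IsSumOfSquaresPoly (s + t) := by
  obtain ⟨r, rfl⟩ := hs; obtain ⟨r', rfl⟩ := ht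
  exact ⟨r + r', by simp⟩

lemma sos_sq_mul (p : Polynomial ℝ) {s : Polynomial ℝ} (hs : IsSumOfSquaresPoly s) :
    IsSumOfSquaresPoly (p ^ 2 * s) := by
  obtain ⟨r, rfl⟩ := hs
  refine ⟨r.map (p * ·), ?_⟩
  rw [Multiset.map_map]
  rw [show ((· ^ 2) ∘ (p * ·)) = fun t => p ^ 2 * t ^ 2 by funext t; simp [mul_pow]]
  rw [← Multiset.sum_map_mul_left]

lemma nonneg_on_closure (h : Polynomial ℝ) (S : Set ℝ) (hS : ∀ x ∈ S, 0 ≤ h.eval x)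
    {y : ℝ} (hy : y ∈ closure S) : 0 ≤ h.eval y := by
  have hcl : closure S ⊆ (fun x => eval x h) ⁻¹' Set.Ici 0 :=
    closure_minimal (fun x hx => hS x hx) (isClosed_Ici.preimage h.continuous)
  exact hcl hy

lemma deg_le {u v : Polynomial ℝ} {k j : ℕ} (hu : u.natDegree ≤ k) (hv : v.natDegree ≤ j) :
    (u * v).natDegree ≤ k + j :=
  natDegree_mul_le.trans (by omega)

lemma lukacs_aux (a b : ℝ) (hab : a < b) :
    ∀ n : ℕ, ∀ q : Polynomial ℝ, q.natDegree ≤ n → (∀ x ∈ Set.Icc a b, 0 ≤ q.eval x) →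
    ∃ s₀ s₁ s₂ s₃ : Polynomial ℝ,
      IsSumOfSquaresPoly s₀ ∧ IsSumOfSquaresPoly s₁ ∧
      IsSumOfSquaresPoly s₂ ∧ IsSumOfSquaresPoly s₃ ∧
      q = s₀ + s₁ * (X - C a) + s₂ * (C b - X) + s₃ * (X - C a) * (C b - X) ∧
      s₀.natDegree ≤ 2 * n ∧
      (s₁ * (X - C a)).natDegree ≤ 2 * n ∧
      (s₂ * (C b - X)).natDegree ≤ 2 * n ∧
      (s₃ * (X - C a) * (C b - X)).natDegree ≤ 2 * n := by
  intro n
  induction n with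
  | zero =>
    intro q hdeg hpos
    have hq : q = C (q.coeff 0) := eq_C_of_natDegree_eq_zero (Nat.le_zero.mp hdeg)
    have hc : 0 ≤ q.coeff 0 := by
      have := hpos a ⟨le_refl a, hab.le⟩
      rwa [hq, eval_C] at this
    refine ⟨q, 0, 0, 0, hq ▸ sos_C hc, sos_zero, sos_zero, sos_zero, by ring, ?_, ?_, ?_, ?_⟩
    · simpa using hdeg
    all_goals simp
  | succ n ih =>
    intro q hdeg hpos
    obtain ⟨x₀, hx₀, hmin⟩ := isCompact_Icc.exists_isMinOn (s := Set.Icc a b)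
      ⟨a, ⟨le_refl a, hab.le⟩⟩ q.continuous.continuousOn
    set m := q.eval x₀ with hm_def
    have hm : 0 ≤ m := hpos x₀ hx₀
    have hp : ∀ x ∈ Set.Icc a b, 0 ≤ (q - C m).eval x := by
      intro x hx
      have := isMinOn_iff.mp hmin x hx
      simp only [eval_sub, eval_C]
      linarith [this]
    have hpdeg : (q - C m).natDegree ≤ n + 1 :=
      (natDegree_sub_le _ _).trans (by simp [hdeg])
    have hXa : (X - C a : Polynomial ℝ) ≠ 0 := X_sub_C_ne_zero a
    have hXa1 : (X - C a : Polynomial ℝ).natDegree ≤ 1 := by simp [natDegree_X_sub_C]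
    have hXb1 : (C b - X : Polynomial ℝ).natDegree ≤ 1 := by
      rw [show (C b - X : Polynomial ℝ) = -(X - C b) by ring, natDegree_neg]
      simp [natDegree_X_sub_C]
    rcases eq_or_lt_of_le hx₀.1 with hxa | hxa
    · -- x₀ = a
      have hroot : (q - C m).IsRoot a := by simp [IsRoot, hxa, hm_def]
      obtain ⟨h, hh⟩ := dvd_iff_isRoot.mpr hroot
      have hdegh : h.natDegree ≤ n := by
        rcases eq_or_ne h 0 with rfl | hne
        · simp
        · have : (q - C m).natDegree = 1 + h.natDegree := by
            rw [hh, natDegree_mul hXa hne, natDegree_X_sub_C]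
          omega
      have hhnn : ∀ x ∈ Set.Icc a b, 0 ≤ h.eval x := by
        have hIoc : ∀ x ∈ Set.Ioc a b, 0 ≤ h.eval x := by
          intro x hx
          have h1 : 0 ≤ (x - a) * h.eval x := by
            have := hp x ⟨hx.1.le, hx.2⟩
            rwa [hh, eval_mul, eval_sub, eval_X, eval_C] at this
          nlinarith [hx.1]
        intro x hx
        exact nonneg_on_closure h (Set.Ioc a b) hIoc (by rwa [closure_Ioc hab.ne])
      obtain ⟨t₀, t₁, t₂, t₃, s0, s1, s2, s3, hht, d0, d1, d2, d3⟩ := ih h hdegh hhnn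
      have hq : q = (X - C a) * h + C m := by linear_combination hh
      refine ⟨C m + (X - C a) ^ 2 * t₁, t₀, (X - C a) ^ 2 * t₃, t₂,
        sos_add (sos_C hm) (sos_sq_mul _ s1), s0, sos_sq_mul _ s3, s2, ?_, ?_, ?_, ?_, ?_⟩
      · rw [hq, hht]; ring
      · rw [show C m + (X - C a) ^ 2 * t₁ = C m + (X - C a) * (t₁ * (X - C a)) by ring]
        refine (natDegree_add_le _ _).trans (max_le (by simp) ?_)
        exact (deg_le hXa1 d1).trans (by omega)
      · exact (deg_le d0 hXa1).trans (by omega)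
      · rw [show (X - C a) ^ 2 * t₃ * (C b - X) = (X - C a) * (t₃ * (X - C a) * (C b - X)) by ring]
        exact (deg_le hXa1 d3).trans (by omega)
      · rw [show t₂ * (X - C a) * (C b - X) = t₂ * (C b - X) * (X - C a) by ring]
        exact (deg_le d2 hXa1).trans (by omega)
    rcases eq_or_lt_of_le hx₀.2 with hxb | hxb
    · -- x₀ = b
      have hroot : (q - C m).IsRoot b := by simp [IsRoot, ← hxb, hm_def]
      obtain ⟨g, hg⟩ := dvd_iff_isRoot.mpr hroot
      set h : Polynomial ℝ := -g with hdef
      have hh : q - C m = (C b - X) * h := by rw [hg, hdef]; ring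
      have hXb : (C b - X : Polynomial ℝ) ≠ 0 := by
        rw [show (C b - X : Polynomial ℝ) = -(X - C b) by ring]
        exact neg_ne_zero.mpr (X_sub_C_ne_zero b)
      have hXbdeg : (C b - X : Polynomial ℝ).natDegree = 1 := by
        rw [show (C b - X : Polynomial ℝ) = -(X - C b) by ring, natDegree_neg, natDegree_X_sub_C]
      have hdegh : h.natDegree ≤ n := by
        rcases eq_or_ne h 0 with hz | hne
        · simp [hz]
        · have : (q - C m).natDegree = 1 + h.natDegree := by
            rw [hh, natDegree_mul hXb hne, hXbdeg]
          omega
      have hhnn : ∀ x ∈ Set.Icc a b, 0 ≤ h.eval x := by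
        have hIco : ∀ x ∈ Set.Ico a b, 0 ≤ h.eval x := by
          intro x hx
          have h1 : 0 ≤ (b - x) * h.eval x := by
            have := hp x ⟨hx.1, hx.2.le⟩
            rwa [hh, eval_mul, eval_sub, eval_X, eval_C] at this
          nlinarith [hx.2]
        intro x hx
        exact nonneg_on_closure h (Set.Ico a b) hIco (by rwa [closure_Ico hab.ne])
      obtain ⟨t₀, t₁, t₂, t₃, s0, s1, s2, s3, hht, d0, d1, d2, d3⟩ := ih h hdegh hhnn
      have hq : q = (C b - X) * h + C m := by linear_combination hh
      refine ⟨C m + (C b - X) ^ 2 * t₂, (C b - X) ^ 2 * t₃, t₀, t₁,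
        sos_add (sos_C hm) (sos_sq_mul _ s2), sos_sq_mul _ s3, s0, s1, ?_, ?_, ?_, ?_, ?_⟩
      · rw [hq, hht]; ring
      · rw [show C m + (C b - X) ^ 2 * t₂ = C m + (C b - X) * (t₂ * (C b - X)) by ring]
        refine (natDegree_add_le _ _).trans (max_le (by simp) ?_)
        exact (deg_le hXb1 d2).trans (by omega)
      · rw [show (C b - X) ^ 2 * t₃ * (X - C a) = (C b - X) * (t₃ * (X - C a) * (C b - X)) by ring]
        exact (deg_le hXb1 d3).trans (by omega)
      · exact (deg_le d0 hXb1).trans (by omega)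
      · rw [show t₁ * (X - C a) * (C b - X) = t₁ * (X - C a) * (C b - X) from rfl]
        exact (deg_le d1 hXb1).trans (by omega)
    · -- interior
      have hlm : IsLocalMin (fun x => eval x q) x₀ := hmin.isLocalMin (Icc_mem_nhds hxa hxb)
      have hd : eval x₀ (derivative q) = 0 := by
        have := hlm.deriv_eq_zero
        rwa [Polynomial.deriv] at this
      have hroot : (q - C m).IsRoot x₀ := by simp [IsRoot, hm_def]
      obtain ⟨g, hg⟩ := dvd_iff_isRoot.mpr hroot
      have hgroot : g.IsRoot x₀ := by
        have e := congrArg derivative hg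
        rw [derivative_sub, derivative_C, sub_zero, derivative_mul, derivative_sub,
          derivative_X, derivative_C, sub_zero, one_mul] at e
        have e2 := congrArg (eval x₀) e
        simp only [eval_add, eval_mul, eval_sub, eval_X, eval_C, sub_self, zero_mul,
          add_zero] at e2
        rw [IsRoot, ← e2, hd]
      obtain ⟨h, hh2⟩ := dvd_iff_isRoot.mpr hgroot
      have hfac : q - C m = (X - C x₀) ^ 2 * h := by rw [hg, hh2]; ring
      have hsq : ((X - C x₀ : Polynomial ℝ) ^ 2).natDegree ≤ 2 := by
        simp [natDegree_pow, natDegree_X_sub_C]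
      have hdegh : h.natDegree ≤ n := by
        rcases eq_or_ne h 0 with hz | hne
        · simp [hz]
        · have : (q - C m).natDegree = 2 + h.natDegree := by
            rw [hfac, natDegree_mul (pow_ne_zero _ (X_sub_C_ne_zero x₀)) hne,
              natDegree_pow, natDegree_X_sub_C]
          omega
      have hS : ∀ x ∈ Set.Icc a b \ {x₀}, 0 ≤ h.eval x := by
        intro x hx
        have hne : x - x₀ ≠ 0 := sub_ne_zero.mpr hx.2
        have h2 : 0 < (x - x₀) ^ 2 := by positivity
        have h1 : 0 ≤ (x - x₀) ^ 2 * h.eval x := by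
          have := hp x hx.1
          rwa [hfac, eval_mul, eval_pow, eval_sub, eval_X, eval_C] at this
        nlinarith
      have hhnn : ∀ x ∈ Set.Icc a b, 0 ≤ h.eval x := by
        intro x hx
        by_cases hxx : x = x₀
        · subst hxx
          refine nonneg_on_closure h _ hS ?_
          have h1 : Set.Ioc x b ⊆ Set.Icc a b \ {x} := by
            intro y hy
            exact ⟨⟨(hxa.trans hy.1).le, hy.2⟩, hy.1.ne'⟩
          have h2 : x ∈ closure (Set.Ioc x b) := by
            rw [closure_Ioc hxb.ne]
            exact ⟨le_refl x, hxb.le⟩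
          exact closure_mono h1 h2
        · exact hS x ⟨hx, hxx⟩
      obtain ⟨t₀, t₁, t₂, t₃, s0, s1, s2, s3, hht, d0, d1, d2, d3⟩ := ih h hdegh hhnn
      have hq : q = (X - C x₀) ^ 2 * h + C m := by linear_combination hfac
      refine ⟨C m + (X - C x₀) ^ 2 * t₀, (X - C x₀) ^ 2 * t₁, (X - C x₀) ^ 2 * t₂,
        (X - C x₀) ^ 2 * t₃, sos_add (sos_C hm) (sos_sq_mul _ s0), sos_sq_mul _ s1,
        sos_sq_mul _ s2, sos_sq_mul _ s3, ?_, ?_, ?_, ?_, ?_⟩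
      · rw [hq, hht]; ring
      · refine (natDegree_add_le _ _).trans (max_le (by simp) ?_)
        exact (deg_le hsq d0).trans (by omega)
      · rw [show (X - C x₀) ^ 2 * t₁ * (X - C a) = (X - C x₀) ^ 2 * (t₁ * (X - C a)) by ring]
        exact (deg_le hsq d1).trans (by omega)
      · rw [show (X - C x₀) ^ 2 * t₂ * (C b - X) = (X - C x₀) ^ 2 * (t₂ * (C b - X)) by ring]
        exact (deg_le hsq d2).trans (by omega)
      · rw [show (X - C x₀) ^ 2 * t₃ * (X - C a) * (C b - X)
            = (X - C x₀) ^ 2 * (t₃ * (X - C a) * (C b - X)) by ring]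
        exact (deg_le hsq d3).trans (by omega)

/-- Corollary of Lukács' theorem: a degree-`d` polynomial nonnegative on `[a,b]`
has a degree-`2d` sum-of-squares certificate from the axioms `{x ≥ a, x ≤ b}`. -/
theorem lukacs_sos_certificate (q : Polynomial ℝ) (d : ℕ) (a b : ℝ) (hab : a < b)
    (hdeg : q.natDegree ≤ d)
    (hpos : ∀ x ∈ Set.Icc a b, 0 ≤ q.eval x) :
    ∃ s₀ s₁ s₂ s₃ : Polynomial ℝ,
      IsSumOfSquaresPoly s₀ ∧ IsSumOfSquaresPoly s₁ ∧
      IsSumOfSquaresPoly s₂ ∧ IsSumOfSquaresPoly s₃ ∧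
      q = s₀ + s₁ * (X - C a) + s₂ * (C b - X) + s₃ * (X - C a) * (C b - X) ∧
      s₀.natDegree ≤ 2 * d ∧
      (s₁ * (X - C a)).natDegree ≤ 2 * d ∧
      (s₂ * (C b - X)).natDegree ≤ 2 * d ∧
      (s₃ * (X - C a) * (C b - X)).natDegree ≤ 2 * d :=
  lukacs_aux a b hab d q hdeg hpos
end
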